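/- Fix a prime p and natural numbers l_1 < l_2 < ⋯ < l_n, and write p_j = p^{l_j}. For a set partition α of [n], define M₀(α) = ∏_{τ∈α} (−1)^{|τ|−1} M(τ), where for τ = {t_1 < ⋯ < t_z}, M(τ) = p_{t_z}(p_{t_z}+p_{t_{z−1}})⋯(p_{t_z}+⋯+p_{t_2}) if z ≥ 2 and M(τ) = 1 if z = 1. Let M_i(α) be the coefficient of (p^k)^i in ∏_{τ∈α} R^τ_k viewed as a polynomial in p^k, where R^τ_k = (p^k − p_{t_z})(p^k − p_{t_z} − p_{t_{z−1}})⋯(p^k − p_{t_z} − ⋯ − p_{t_2}) for z ≥ 2 and R^τ_k = 1 for z = 1. Then for all i ≥ 0, M_i(α) = ∑_{β ∈ Cut(α,i)} M₀(β), where Cut(α,i) is the set of set partitions β of [n] refining α with |β| = |α| + i. -/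

import Mathlib

open scoped Classical

/-- `ρ` (a finset of finsets) is a set partition of the whole finite type `α`. -/
def IsSetPartition {α : Type*} [Fintype α] [DecidableEq α] (ρ : Finset (Finset α)) : Prop :=
  (∀ t ∈ ρ, t.Nonempty) ∧ (ρ : Set (Finset α)).PairwiseDisjoint id ∧
    ρ.sup id = Finset.univ

/-- For a block `τ ⊆ [n]` and `p_j = p^{l_j}`, the polynomial
`R^τ(X) = ∏_{a=2}^{z} (X − p_{t_z} − ⋯ − p_{t_a})`, where `τ = {t_1 < ⋯ < t_z}`
(the factors are indexed by the non-minimal elements `s` of `τ`, the factor for `s`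
being `X − ∑_{s' ∈ τ, s' ≥ s} p_{s'}`). -/
noncomputable def Rpoly {n : ℕ} (p : ℕ) (l : Fin n → ℕ) (τ : Finset (Fin n)) :
    Polynomial ℤ :=
  ∏ s ∈ τ.filter (fun s => ∃ s' ∈ τ, s' < s),
    (Polynomial.X - Polynomial.C (∑ s' ∈ τ.filter (fun s' => s ≤ s'), ((p : ℤ) ^ (l s'))))

/-- `M(τ) = p_{t_z}(p_{t_z}+p_{t_{z-1}})⋯(p_{t_z}+⋯+p_{t_2})` (and `1` if `|τ| = 1`). -/
noncomputable def Mterm {n : ℕ} (p : ℕ) (l : Fin n → ℕ) (τ : Finset (Fin n)) : ℤ :=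
  ∏ s ∈ τ.filter (fun s => ∃ s' ∈ τ, s' < s),
    (∑ s' ∈ τ.filter (fun s' => s ≤ s'), ((p : ℤ) ^ (l s')))

namespace Stmt16

variable {n : ℕ}

/-- Partitions of a finset `T`. -/
noncomputable def partitionsOf (T : Finset (Fin n)) : Finset (Finset (Finset (Fin n))) :=
  Finset.univ.filter fun β =>
    (∀ σ ∈ β, σ.Nonempty) ∧ (β : Set (Finset (Fin n))).PairwiseDisjoint id ∧ β.sup id = T

lemma mem_partitionsOf {T : Finset (Fin n)} {β : Finset (Finset (Fin n))} :
    β ∈ partitionsOf T ↔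
      (∀ σ ∈ β, σ.Nonempty) ∧ (β : Set (Finset (Fin n))).PairwiseDisjoint id ∧ β.sup id = T := by
  simp [partitionsOf]

lemma subset_of_mem {T : Finset (Fin n)} {β : Finset (Finset (Fin n))}
    (hβ : β ∈ partitionsOf T) {σ} (hσ : σ ∈ β) : σ ⊆ T := by
  rw [mem_partitionsOf] at hβ
  rw [← hβ.2.2]
  exact Finset.le_sup (f := id) hσ

lemma blocks_eq {T : Finset (Fin n)} {β : Finset (Finset (Fin n))}
    (hβ : β ∈ partitionsOf T) {σ σ' : Finset (Fin n)} (hσ : σ ∈ β)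
    (hσ' : σ' ∈ β) {x : Fin n} (hx : x ∈ σ) (hx' : x ∈ σ') : σ = σ' := by
  rw [mem_partitionsOf] at hβ
  by_contra hne
  exact Finset.disjoint_left.1 (hβ.2.1 hσ hσ' hne) hx hx'

lemma exists_block {T : Finset (Fin n)} {β : Finset (Finset (Fin n))}
    (hβ : β ∈ partitionsOf T) {x : Fin n} (hx : x ∈ T) : ∃ σ ∈ β, x ∈ σ := by
  rw [mem_partitionsOf] at hβ
  have := hβ.2.2 ▸ hx
  simpa [Finset.mem_sup] using this

noncomputable def blockOf (β : Finset (Finset (Fin n))) (x : Fin n) : Finset (Fin n) :=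
  (β.filter fun σ => x ∈ σ).sup id

lemma blockOf_spec {T : Finset (Fin n)} {β : Finset (Finset (Fin n))}
    (hβ : β ∈ partitionsOf T) {x : Fin n} (hx : x ∈ T) :
    blockOf β x ∈ β ∧ x ∈ blockOf β x := by
  obtain ⟨σ, hσ, hxσ⟩ := exists_block hβ hx
  have hfil : β.filter (fun σ => x ∈ σ) = {σ} := by
    ext σ'
    simp only [Finset.mem_filter, Finset.mem_singleton]
    constructor
    · rintro ⟨h1, h2⟩
      exact blocks_eq hβ h1 hσ h2 hxσ
    · rintro rfl; exact ⟨hσ, hxσ⟩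
  unfold blockOf
  rw [hfil]
  simpa using ⟨hσ, hxσ⟩

lemma eq_blockOf {T : Finset (Fin n)} {β : Finset (Finset (Fin n))}
    (hβ : β ∈ partitionsOf T) {σ : Finset (Fin n)} (hσ : σ ∈ β) {x : Fin n} (hx : x ∈ σ) :
    σ = blockOf β x := by
  have hxT : x ∈ T := subset_of_mem hβ hσ hx
  exact blocks_eq hβ hσ (blockOf_spec hβ hxT).1 hx (blockOf_spec hβ hxT).2

lemma filter_lt_eq_erase_min' (τ : Finset (Fin n)) (hτ : τ.Nonempty) :
    τ.filter (fun s => ∃ s' ∈ τ, s' < s) = τ.erase (τ.min' hτ) := by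
  ext s
  simp only [Finset.mem_filter, Finset.mem_erase]
  constructor
  · rintro ⟨hs, s', hs', hlt⟩
    refine ⟨?_, hs⟩
    rintro rfl
    exact absurd (τ.min'_le s' hs') (not_le.2 hlt)
  · rintro ⟨hne, hs⟩
    exact ⟨hs, τ.min' hτ, τ.min'_mem hτ, lt_of_le_of_ne (τ.min'_le s hs) (Ne.symm hne)⟩

noncomputable def wsum (p : ℕ) (l : Fin n → ℕ) (σ : Finset (Fin n)) : ℤ :=
  ∑ s ∈ σ, (p : ℤ) ^ (l s)

noncomputable def M0 (p : ℕ) (l : Fin n → ℕ) (β : Finset (Finset (Fin n))) : ℤ :=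
  ∏ σ ∈ β, ((-1 : ℤ) ^ (σ.card - 1) * Mterm p l σ)

lemma Mterm_singleton (p : ℕ) (l : Fin n → ℕ) (t : Fin n) : Mterm p l {t} = 1 := by
  unfold Mterm
  rw [show ({t} : Finset (Fin n)).filter (fun s => ∃ s' ∈ ({t} : Finset (Fin n)), s' < s) = ∅ by
    ext s; simp; rintro rfl; exact le_refl _]
  simp

lemma Rpoly_singleton (p : ℕ) (l : Fin n → ℕ) (t : Fin n) : Rpoly p l {t} = 1 := by
  unfold Rpoly
  rw [show ({t} : Finset (Fin n)).filter (fun s => ∃ s' ∈ ({t} : Finset (Fin n)), s' < s) = ∅ by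
    ext s; simp; rintro rfl; exact le_refl _]
  simp

lemma partitionsOf_singleton (t : Fin n) :
    partitionsOf ({t} : Finset (Fin n)) = {({({t} : Finset (Fin n))} : Finset (Finset (Fin n)))} := by
  ext β
  rw [mem_partitionsOf, Finset.mem_singleton]
  constructor
  · rintro ⟨h1, h2, h3⟩
    have hall : ∀ σ ∈ β, σ = {t} := by
      intro σ hσ
      have hsub : σ ⊆ {t} := by
        rw [← h3]; exact Finset.le_sup (f := id) hσ
      obtain ⟨x, hx⟩ := h1 σ hσ
      have : x = t := by simpa using hsub hx
      subst this
      exact Finset.Subset.antisymm hsub (Finset.singleton_subset_iff.2 hx)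
    have ht : t ∈ β.sup id := by rw [h3]; simp
    rw [Finset.mem_sup] at ht
    obtain ⟨σ, hσ, hxσ⟩ := ht
    ext σ'
    simp only [Finset.mem_singleton]
    constructor
    · intro h; exact hall σ' h
    · rintro rfl; rwa [← hall σ hσ]
  · rintro rfl
    refine ⟨by simp, by simp, by simp⟩

lemma nonempty_of_mem_partitionsOf {T : Finset (Fin n)} (hT : T.Nonempty)
    {β : Finset (Finset (Fin n))} (hβ : β ∈ partitionsOf T) : β.Nonempty := by
  obtain ⟨x, hx⟩ := hT
  obtain ⟨σ, hσ, -⟩ := exists_block hβ hx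
  exact ⟨σ, hσ⟩

lemma sum_wsum (p : ℕ) (l : Fin n → ℕ) {T : Finset (Fin n)} {β : Finset (Finset (Fin n))}
    (hβ : β ∈ partitionsOf T) : ∑ σ ∈ β, wsum p l σ = wsum p l T := by
  rw [mem_partitionsOf] at hβ
  unfold wsum
  rw [← hβ.2.2, Finset.sup_eq_biUnion, Finset.sum_biUnion hβ.2.1]
  rfl

lemma Mterm_insert (p : ℕ) (l : Fin n → ℕ) {σ : Finset (Fin n)} (hσ : σ.Nonempty)
    {m : Fin n} (hm : ∀ s ∈ σ, m < s) :
    Mterm p l (insert m σ) = wsum p l σ * Mterm p l σ := by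
  have hmσ : m ∉ σ := fun h => lt_irrefl m (hm m h)
  have hne : (insert m σ).Nonempty := ⟨m, Finset.mem_insert_self _ _⟩
  have hmin : (insert m σ).min' hne = m := by
    apply le_antisymm
    · exact Finset.min'_le _ _ (Finset.mem_insert_self _ _)
    · apply Finset.le_min'
      intro y hy
      rcases Finset.mem_insert.1 hy with rfl | hy
      · exact le_refl _
      · exact (hm y hy).le
  have hfil : (insert m σ).filter (fun s => ∃ s' ∈ insert m σ, s' < s) = σ := by
    rw [filter_lt_eq_erase_min' _ hne, hmin, Finset.erase_insert hmσ]
  have hfac : ∀ s ∈ σ, (insert m σ).filter (fun s' => s ≤ s') = σ.filter (fun s' => s ≤ s') := by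
    intro s hs
    rw [Finset.filter_insert, if_neg (not_le.2 (hm s hs))]
  unfold Mterm
  rw [hfil]
  rw [Finset.prod_congr rfl (fun s hs => by rw [hfac s hs])]
  -- now split off the minimum of σ
  set m' := σ.min' hσ with hm'
  rw [filter_lt_eq_erase_min' σ hσ, ← Finset.mul_prod_erase σ _ (σ.min'_mem hσ), ← hm',
    show σ.filter (fun s' => m' ≤ s') = σ from
      Finset.filter_true_of_mem (fun s hs => σ.min'_le s hs)]
  rfl

lemma Rpoly_erase_min (p : ℕ) (l : Fin n → ℕ) (τ : Finset (Fin n)) (hτ : τ.Nonempty)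
    (hτ' : (τ.erase (τ.min' hτ)).Nonempty) :
    Rpoly p l τ = Rpoly p l (τ.erase (τ.min' hτ)) *
      (Polynomial.X - Polynomial.C (wsum p l (τ.erase (τ.min' hτ)))) := by
  set m := τ.min' hτ with hmdef
  set τ' := τ.erase m with hτ'def
  have hmlt : ∀ s ∈ τ', m < s := by
    intro s hs
    exact lt_of_le_of_ne (τ.min'_le s (Finset.mem_of_mem_erase hs))
      (Ne.symm (Finset.ne_of_mem_erase hs))
  have hfac : ∀ s ∈ τ', τ.filter (fun s' => s ≤ s') = τ'.filter (fun s' => s ≤ s') := by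
    intro s hs
    rw [hτ'def, Finset.filter_erase, Finset.erase_eq_of_notMem]
    rw [Finset.mem_filter]
    rintro ⟨-, hle⟩
    exact absurd hle (not_le.2 (hmlt s hs))
  unfold Rpoly
  rw [filter_lt_eq_erase_min' τ hτ, ← hτ'def]
  rw [Finset.prod_congr rfl (fun s hs => by rw [hfac s hs])]
  set m' := τ'.min' hτ' with hm'def
  rw [filter_lt_eq_erase_min' τ' hτ', ← hm'def,
    ← Finset.mul_prod_erase τ' _ (τ'.min'_mem hτ'), ← hm'def,
    show τ'.filter (fun s' => m' ≤ s') = τ' from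
      Finset.filter_true_of_mem (fun s hs => τ'.min'_le s hs)]
  rw [mul_comm]
  rfl

section InsertBlock

variable {m : Fin n} {τ' : Finset (Fin n)}

lemma not_mem_block {β' : Finset (Finset (Fin n))} (hβ' : β' ∈ partitionsOf τ')
    (hm : m ∉ τ') {σ : Finset (Fin n)} (hσ : σ ∈ β') : m ∉ σ :=
  fun h => hm (subset_of_mem hβ' hσ h)

lemma insert_not_mem_erase {β' : Finset (Finset (Fin n))} (hβ' : β' ∈ partitionsOf τ')
    (hm : m ∉ τ') {σ : Finset (Fin n)} :
    insert m σ ∉ β'.erase σ := by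
  intro h
  exact not_mem_block hβ' hm (Finset.mem_of_mem_erase h) (Finset.mem_insert_self _ _)

lemma part_insert_block (hm : m ∉ τ')
    {β' : Finset (Finset (Fin n))} (hβ' : β' ∈ partitionsOf τ') {σ : Finset (Fin n)}
    (hσ : σ ∈ β') :
    insert (insert m σ) (β'.erase σ) ∈ partitionsOf (insert m τ') := by
  have hβ'' := mem_partitionsOf.1 hβ'
  have hA : insert m σ ∉ β'.erase σ := insert_not_mem_erase hβ' hm
  rw [mem_partitionsOf]
  refine ⟨?_, ?_, ?_⟩
  · intro σ'' hσ''
    rcases Finset.mem_insert.1 hσ'' with rfl | h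
    · exact ⟨m, Finset.mem_insert_self _ _⟩
    · exact hβ''.1 _ (Finset.mem_of_mem_erase h)
  · rw [Finset.coe_insert]
    refine Set.PairwiseDisjoint.insert
      (hβ''.2.1.subset (by exact_mod_cast Finset.coe_subset.2 (Finset.erase_subset _ _))) ?_
    intro σ'' hσ'' hne
    have hσ''e : σ'' ∈ β'.erase σ := by exact_mod_cast hσ''
    have h1 : m ∉ σ'' := not_mem_block hβ' hm (Finset.mem_of_mem_erase hσ''e)
    have h2 : Disjoint σ σ'' :=
      hβ''.2.1 (by exact_mod_cast hσ) (by exact_mod_cast Finset.mem_of_mem_erase hσ''e)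
        (Ne.symm (Finset.ne_of_mem_erase hσ''e))
    show Disjoint (id (insert m σ)) (id σ'')
    simp only [id]
    rw [Finset.disjoint_insert_left]
    exact ⟨h1, h2⟩
  · have hsup : β'.sup id = σ ⊔ (β'.erase σ).sup id := by
      conv_lhs => rw [← Finset.insert_erase hσ]
      rw [Finset.sup_insert]
      rfl
    rw [Finset.sup_insert]
    show insert m σ ⊔ (β'.erase σ).sup id = insert m τ'
    rw [Finset.sup_eq_union, Finset.insert_union, ← Finset.sup_eq_union, ← hsup, hβ''.2.2]

lemma singleton_not_mem_insert_block (hm : m ∉ τ')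
    {β' : Finset (Finset (Fin n))} (hβ' : β' ∈ partitionsOf τ') {σ : Finset (Fin n)}
    (hσ : σ ∈ β') :
    ({m} : Finset (Fin n)) ∉ insert (insert m σ) (β'.erase σ) := by
  have hσne : σ.Nonempty := (mem_partitionsOf.1 hβ').1 σ hσ
  intro h
  rcases Finset.mem_insert.1 h with h' | h'
  · obtain ⟨x, hx⟩ := hσne
    have hxm : x ∈ ({m} : Finset (Fin n)) := h' ▸ Finset.mem_insert.2 (Or.inr hx)
    rw [Finset.mem_singleton] at hxm
    subst hxm
    exact not_mem_block hβ' hm hσ hx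
  · exact hm (subset_of_mem hβ' (Finset.mem_of_mem_erase h') (Finset.mem_singleton_self m))

end InsertBlock

lemma sum_singleton_case {M : Type*} [AddCommMonoid M] (F : Finset (Finset (Fin n)) → M)
    (τ : Finset (Fin n)) (hτ : τ.Nonempty) :
    ∑ β ∈ (partitionsOf τ).filter (fun β => ({τ.min' hτ} : Finset (Fin n)) ∈ β), F β
      = ∑ β' ∈ partitionsOf (τ.erase (τ.min' hτ)), F (insert {τ.min' hτ} β') := by
  set m := τ.min' hτ with hmdef
  set τ' := τ.erase m with hτ'def
  have hmτ' : m ∉ τ' := Finset.notMem_erase m τ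
  have hins : insert m τ' = τ := Finset.insert_erase (τ.min'_mem hτ)
  have hsing_not : ∀ β' ∈ partitionsOf τ', ({m} : Finset (Fin n)) ∉ β' := by
    intro β' hβ' h
    exact hmτ' (subset_of_mem hβ' h (Finset.mem_singleton_self m))
  refine Finset.sum_nbij' (i := fun β => β.erase {m}) (j := fun β' => insert {m} β')
    ?_ ?_ ?_ ?_ ?_
  · -- erase lands in partitionsOf τ'
    intro β hβf
    obtain ⟨hβP, hmem⟩ := Finset.mem_filter.1 hβf
    have hβ'' := mem_partitionsOf.1 hβP
    rw [mem_partitionsOf]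
    refine ⟨fun σ hσ => hβ''.1 σ (Finset.mem_of_mem_erase hσ), 
      hβ''.2.1.subset (by exact_mod_cast Finset.coe_subset.2 (Finset.erase_subset _ _)), ?_⟩
    ext x
    rw [Finset.mem_sup]
    constructor
    · rintro ⟨σ, hσe, hxσ⟩
      have hσβ := Finset.mem_of_mem_erase hσe
      refine Finset.mem_erase.2 ⟨?_, subset_of_mem hβP hσβ hxσ⟩
      rintro rfl
      exact Finset.ne_of_mem_erase hσe
        (blocks_eq hβP hσβ hmem hxσ (Finset.mem_singleton_self m))
    · intro hx
      obtain ⟨σ, hσ, hxσ⟩ := exists_block hβP (Finset.mem_of_mem_erase hx)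
      refine ⟨σ, Finset.mem_erase.2 ⟨?_, hσ⟩, hxσ⟩
      rintro rfl
      exact Finset.ne_of_mem_erase hx (by simpa using hxσ)
  · -- insert {m} lands in filter
    intro β' hβ'
    have hβ'' := mem_partitionsOf.1 hβ'
    rw [Finset.mem_filter]
    refine ⟨?_, Finset.mem_insert_self _ _⟩
    rw [mem_partitionsOf]
    refine ⟨?_, ?_, ?_⟩
    · intro σ hσ
      rcases Finset.mem_insert.1 hσ with rfl | h
      · exact ⟨m, Finset.mem_singleton_self m⟩
      · exact hβ''.1 σ h
    · rw [Finset.coe_insert]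
      refine Set.PairwiseDisjoint.insert hβ''.2.1 ?_
      intro σ hσ _
      show Disjoint (id ({m} : Finset (Fin n))) (id σ)
      simp only [id]
      rw [Finset.disjoint_singleton_left]
      exact not_mem_block hβ' hmτ' (by exact_mod_cast hσ)
    · rw [Finset.sup_insert]
      show ({m} : Finset (Fin n)) ⊔ β'.sup id = τ
      rw [hβ''.2.2, Finset.sup_eq_union]
      rw [show ({m} : Finset (Fin n)) ∪ τ' = insert m τ' by ext x; simp, hins]
  · intro β hβf
    exact Finset.insert_erase (Finset.mem_filter.1 hβf).2
  · intro β' hβ'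
    exact Finset.erase_insert (hsing_not β' hβ')
  · intro β hβf
    rw [Finset.insert_erase (Finset.mem_filter.1 hβf).2]

lemma sum_nonsingleton_case {M : Type*} [AddCommMonoid M] (F : Finset (Finset (Fin n)) → M)
    (τ : Finset (Fin n)) (hτ : τ.Nonempty) :
    ∑ β ∈ (partitionsOf τ).filter (fun β => ({τ.min' hτ} : Finset (Fin n)) ∉ β), F β
      = ∑ β' ∈ partitionsOf (τ.erase (τ.min' hτ)), ∑ σ ∈ β',
          F (insert (insert (τ.min' hτ) σ) (β'.erase σ)) := by
  classical
  set m := τ.min' hτ with hmdef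
  set τ' := τ.erase m with hτ'def
  have hmτ' : m ∉ τ' := Finset.notMem_erase m τ
  have hins : insert m τ' = τ := Finset.insert_erase (τ.min'_mem hτ)
  rw [Finset.sum_sigma' (partitionsOf τ') (fun β' => β')
    (fun β' σ => F (insert (insert m σ) (β'.erase σ)))]
  refine (Finset.sum_nbij'
    (i := fun x : Σ _ : Finset (Finset (Fin n)), Finset (Fin n) =>
      insert (insert m x.2) (x.1.erase x.2))
    (j := fun β => ⟨insert ((blockOf β m).erase m) (β.erase (blockOf β m)),
      (blockOf β m).erase m⟩)
    ?_ ?_ ?_ ?_ ?_).symm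
  · -- i maps into the filter set
    rintro ⟨β', σ⟩ hx
    obtain ⟨hβ', hσ⟩ := Finset.mem_sigma.1 hx
    rw [Finset.mem_filter]
    exact ⟨hins ▸ part_insert_block hmτ' hβ' hσ, singleton_not_mem_insert_block hmτ' hβ' hσ⟩
  · -- j maps into the sigma set
    intro β hβf
    obtain ⟨hβP, hms⟩ := Finset.mem_filter.1 hβf
    have hmτ : m ∈ τ := τ.min'_mem hτ
    obtain ⟨hB, hmB⟩ := blockOf_spec hβP hmτ
    set B := blockOf β m with hBdef
    have hBne : B ≠ {m} := fun h => hms (h ▸ hB)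
    have hσ₀ : (B.erase m).Nonempty := by
      rw [Finset.nonempty_iff_ne_empty]
      intro h
      rcases (Finset.erase_eq_empty_iff B m).1 h with h' | h'
      · exact Finset.notMem_empty m (h' ▸ hmB)
      · exact hBne h'
    have hσ₀sub : B.erase m ⊆ B := Finset.erase_subset _ _
    have hσ₀notmem : B.erase m ∉ β.erase B := by
      intro h
      have hne := Finset.ne_of_mem_erase h
      have hdisj := (mem_partitionsOf.1 hβP).2.1 (Finset.mem_of_mem_erase h) hB hne
      obtain ⟨x, hx⟩ := hσ₀
      exact Finset.disjoint_left.1 hdisj hx (hσ₀sub hx)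
    rw [Finset.mem_sigma]
    constructor
    · -- insert (B.erase m) (β.erase B) ∈ partitionsOf τ'
      have hβ'' := mem_partitionsOf.1 hβP
      rw [mem_partitionsOf]
      refine ⟨?_, ?_, ?_⟩
      · intro σ hσ
        rcases Finset.mem_insert.1 hσ with rfl | h
        · exact hσ₀
        · exact hβ''.1 σ (Finset.mem_of_mem_erase h)
      · rw [Finset.coe_insert]
        refine Set.PairwiseDisjoint.insert
          (hβ''.2.1.subset (by exact_mod_cast Finset.coe_subset.2 (Finset.erase_subset _ _))) ?_
        intro σ hσ _
        have hσe : σ ∈ β.erase B := by exact_mod_cast hσ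
        have hdisj : Disjoint B σ := hβ''.2.1 hB
          (by exact_mod_cast Finset.mem_of_mem_erase hσe)
          (Ne.symm (Finset.ne_of_mem_erase hσe))
        show Disjoint (id (B.erase m)) (id σ)
        simp only [id]
        exact hdisj.mono_left hσ₀sub
      · ext x
        rw [Finset.mem_sup]
        constructor
        · rintro ⟨σ, hσi, hxσ⟩
          rcases Finset.mem_insert.1 hσi with rfl | h
          · exact Finset.mem_erase.2 ⟨Finset.ne_of_mem_erase hxσ,
              subset_of_mem hβP hB (Finset.mem_of_mem_erase hxσ)⟩
          · refine Finset.mem_erase.2 ⟨?_, subset_of_mem hβP (Finset.mem_of_mem_erase h) hxσ⟩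
            rintro rfl
            exact Finset.ne_of_mem_erase h
              (blocks_eq hβP (Finset.mem_of_mem_erase h) hB hxσ hmB)
        · intro hx
          obtain ⟨σ, hσ, hxσ⟩ := exists_block hβP (Finset.mem_of_mem_erase hx)
          by_cases hcs : σ = B
          · subst hcs
            exact ⟨Finset.erase B m, Finset.mem_insert_self _ _,
              Finset.mem_erase.2 ⟨Finset.ne_of_mem_erase hx, hxσ⟩⟩
          · exact ⟨σ, Finset.mem_insert.2 (Or.inr (Finset.mem_erase.2 ⟨hcs, hσ⟩)), hxσ⟩
    · exact Finset.mem_insert_self _ _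
  · -- left inverse : j (i x) = x
    rintro ⟨β', σ⟩ hx
    obtain ⟨hβ', hσ⟩ := Finset.mem_sigma.1 hx
    have hmσ : m ∉ σ := not_mem_block hβ' hmτ' hσ
    have hA : insert m σ ∉ β'.erase σ := insert_not_mem_erase hβ' hmτ'
    have hpart : insert (insert m σ) (β'.erase σ) ∈ partitionsOf τ :=
      hins ▸ part_insert_block hmτ' hβ' hσ
    have hBeq : blockOf (insert (insert m σ) (β'.erase σ)) m = insert m σ :=
      (eq_blockOf hpart (Finset.mem_insert_self _ _) (Finset.mem_insert_self m σ)).symm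
    dsimp only
    rw [hBeq, Finset.erase_insert hmσ, Finset.erase_insert hA, Finset.insert_erase hσ]
  · -- right inverse : i (j β) = β
    intro β hβf
    obtain ⟨hβP, hms⟩ := Finset.mem_filter.1 hβf
    have hmτ : m ∈ τ := τ.min'_mem hτ
    obtain ⟨hB, hmB⟩ := blockOf_spec hβP hmτ
    set B := blockOf β m with hBdef
    have hBne : B ≠ {m} := fun h => hms (h ▸ hB)
    have hσ₀ : (B.erase m).Nonempty := by
      rw [Finset.nonempty_iff_ne_empty]
      intro h
      rcases (Finset.erase_eq_empty_iff B m).1 h with h' | h'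
      · exact Finset.notMem_empty m (h' ▸ hmB)
      · exact hBne h'
    have hσ₀notmem : B.erase m ∉ β.erase B := by
      intro h
      have hne := Finset.ne_of_mem_erase h
      have hdisj := (mem_partitionsOf.1 hβP).2.1 (Finset.mem_of_mem_erase h) hB hne
      obtain ⟨x, hx⟩ := hσ₀
      exact Finset.disjoint_left.1 hdisj hx (Finset.erase_subset _ _ hx)
    dsimp only
    rw [Finset.insert_erase hmB, Finset.erase_insert hσ₀notmem, Finset.insert_erase hB]
  · rintro ⟨β', σ⟩ hx
    rfl

lemma summand_eq (p : ℕ) (l : Fin n → ℕ) {m : Fin n} {τ' : Finset (Fin n)} (hmτ' : m ∉ τ')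
    (hmlt : ∀ s ∈ τ', m < s) (hτ' : τ'.Nonempty)
    {β' : Finset (Finset (Fin n))} (hβ' : β' ∈ partitionsOf τ') :
    Polynomial.C (M0 p l (insert {m} β')) * Polynomial.X ^ ((insert {m} β').card - 1)
      + ∑ σ ∈ β', Polynomial.C (M0 p l (insert (insert m σ) (β'.erase σ))) *
          Polynomial.X ^ ((insert (insert m σ) (β'.erase σ)).card - 1)
    = (Polynomial.C (M0 p l β') * Polynomial.X ^ (β'.card - 1)) *
        (Polynomial.X - Polynomial.C (wsum p l τ')) := by
  have hsn : ({m} : Finset (Fin n)) ∉ β' := fun h =>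
    hmτ' (subset_of_mem hβ' h (Finset.mem_singleton_self m))
  have hβne : β'.Nonempty := nonempty_of_mem_partitionsOf hτ' hβ'
  obtain ⟨k, hk⟩ : ∃ k, β'.card = k + 1 :=
    ⟨β'.card - 1, (Nat.succ_pred_eq_of_pos (Finset.card_pos.2 hβne)).symm⟩
  have h1 : M0 p l (insert {m} β') = M0 p l β' := by
    unfold M0
    rw [Finset.prod_insert hsn, Finset.card_singleton, Mterm_singleton]
    simp
  have h1c : (insert {m} β').card - 1 = k + 1 := by
    rw [Finset.card_insert_of_notMem hsn, hk]
    omega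
  have h2 : ∀ σ ∈ β', M0 p l (insert (insert m σ) (β'.erase σ)) = -(wsum p l σ) * M0 p l β' := by
    intro σ hσ
    have hσne := (mem_partitionsOf.1 hβ').1 σ hσ
    have hmltσ : ∀ s ∈ σ, m < s := fun s hs => hmlt s (subset_of_mem hβ' hσ hs)
    have hmσ : m ∉ σ := fun h => lt_irrefl m (hmltσ m h)
    have hA : insert m σ ∉ β'.erase σ := insert_not_mem_erase hβ' hmτ'
    unfold M0
    rw [Finset.prod_insert hA, Finset.card_insert_of_notMem hmσ, Mterm_insert p l hσne hmltσ,
      ← Finset.mul_prod_erase β' _ hσ]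
    have hps : σ.card - 1 + 1 = σ.card := Nat.succ_pred_eq_of_pos (Finset.card_pos.2 hσne)
    have hsgn : ((-1 : ℤ)) ^ (σ.card + 1 - 1) = -((-1 : ℤ) ^ (σ.card - 1)) := by
      rw [Nat.add_sub_cancel]
      conv_lhs => rw [← hps]
      rw [pow_succ]
      ring
    rw [hsgn]
    ring
  have h2c : ∀ σ ∈ β', (insert (insert m σ) (β'.erase σ)).card - 1 = k := by
    intro σ hσ
    have hA : insert m σ ∉ β'.erase σ := insert_not_mem_erase hβ' hmτ'
    rw [Finset.card_insert_of_notMem hA, Finset.card_erase_of_mem hσ, hk]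
    omega
  rw [h1, h1c, Finset.sum_congr rfl (fun σ hσ => by rw [h2 σ hσ, h2c σ hσ]), ← Finset.sum_mul,
    ← map_sum]
  have hws : ∑ σ ∈ β', -(wsum p l σ) * M0 p l β' = -(wsum p l τ') * M0 p l β' := by
    rw [← Finset.sum_mul]
    congr 1
    rw [Finset.sum_neg_distrib, sum_wsum p l hβ']
  rw [hws, hk]
  simp only [Nat.add_sub_cancel, map_mul, map_neg]
  ring

lemma Rpoly_eq_sum (p : ℕ) (l : Fin n → ℕ) : ∀ τ : Finset (Fin n), τ.Nonempty →
    Rpoly p l τ = ∑ β ∈ partitionsOf τ, Polynomial.C (M0 p l β) * Polynomial.X ^ (β.card - 1) := by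
  intro τ
  induction τ using Finset.strongInductionOn with
  | _ τ ih =>
  intro hτ
  by_cases hτ' : (τ.erase (τ.min' hτ)).Nonempty
  · have hmlt : ∀ s ∈ τ.erase (τ.min' hτ), τ.min' hτ < s := fun s hs =>
      lt_of_le_of_ne (τ.min'_le s (Finset.mem_of_mem_erase hs)) (Ne.symm (Finset.ne_of_mem_erase hs))
    rw [Rpoly_erase_min p l τ hτ hτ',
      ih _ (Finset.erase_ssubset (τ.min'_mem hτ)) hτ',
      ← Finset.sum_filter_add_sum_filter_not (partitionsOf τ)
        (fun β => ({τ.min' hτ} : Finset (Fin n)) ∈ β)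
        (fun β => Polynomial.C (M0 p l β) * Polynomial.X ^ (β.card - 1)),
      sum_singleton_case _ τ hτ, sum_nonsingleton_case _ τ hτ,
      ← Finset.sum_add_distrib,
      Finset.sum_congr rfl
        (fun β' hβ' => summand_eq p l (Finset.notMem_erase _ _) hmlt hτ' hβ'),
      ← Finset.sum_mul]
  · obtain ⟨t, ht⟩ : ∃ t, τ = {t} := by
      refine ⟨τ.min' hτ, ?_⟩
      have hemp := Finset.not_nonempty_iff_eq_empty.1 hτ'
      ext x
      constructor
      · intro hx
        rw [Finset.mem_singleton]
        by_contra hne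
        exact (Finset.notMem_empty x) (hemp ▸ Finset.mem_erase.2 ⟨hne, hx⟩)
      · intro h
        rw [Finset.mem_singleton] at h
        subst h
        exact τ.min'_mem hτ
    subst ht
    rw [Rpoly_singleton, partitionsOf_singleton, Finset.sum_singleton]
    simp [M0, Mterm_singleton]

lemma card_le_of_refines {T : Finset (Fin n)} {α β : Finset (Finset (Fin n))}
    (hα : α ∈ partitionsOf T) (hβ : β ∈ partitionsOf T)
    (href : ∀ σ ∈ β, ∃ τ ∈ α, σ ⊆ τ) : α.card ≤ β.card := by
  classical
  apply Finset.card_le_card_of_injOn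
    (f := fun τ => if h : τ.Nonempty then blockOf β (τ.min' h) else ∅)
  · intro τ hτ
    have hne : τ.Nonempty := (mem_partitionsOf.1 hα).1 τ hτ
    simp only [dif_pos hne, Finset.mem_coe]
    exact (blockOf_spec hβ (subset_of_mem hα hτ (τ.min'_mem hne))).1
  · intro τ₁ h₁' τ₂ h₂' heq
    have h₁ : τ₁ ∈ α := Finset.mem_coe.1 h₁'
    have h₂ : τ₂ ∈ α := Finset.mem_coe.1 h₂'
    have hne₁ : τ₁.Nonempty := (mem_partitionsOf.1 hα).1 τ₁ h₁
    have hne₂ : τ₂.Nonempty := (mem_partitionsOf.1 hα).1 τ₂ h₂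
    dsimp only at heq
    rw [dif_pos hne₁, dif_pos hne₂] at heq
    set σ := blockOf β (τ₁.min' hne₁) with hσdef
    have hσβ : σ ∈ β := (blockOf_spec hβ (subset_of_mem hα h₁ (τ₁.min'_mem hne₁))).1
    have hx₁ : τ₁.min' hne₁ ∈ σ := (blockOf_spec hβ (subset_of_mem hα h₁ (τ₁.min'_mem hne₁))).2
    have hx₂ : τ₂.min' hne₂ ∈ σ := by
      rw [heq]
      exact (blockOf_spec hβ (subset_of_mem hα h₂ (τ₂.min'_mem hne₂))).2
    obtain ⟨τ₀, hτ₀, hsub⟩ := href σ hσβ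
    have e₁ : τ₁ = τ₀ := blocks_eq hα h₁ hτ₀ (τ₁.min'_mem hne₁) (hsub hx₁)
    have e₂ : τ₂ = τ₀ := blocks_eq hα h₂ hτ₀ (τ₂.min'_mem hne₂) (hsub hx₂)
    rw [e₁, e₂]

lemma prod_Rpoly (p : ℕ) (l : Fin n → ℕ) {T : Finset (Fin n)} {α : Finset (Finset (Fin n))}
    (hα : α ∈ partitionsOf T) :
    ∏ τ ∈ α, Rpoly p l τ =
      ∑ β ∈ (partitionsOf T).filter (fun β => ∀ σ ∈ β, ∃ τ ∈ α, σ ⊆ τ),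
        Polynomial.C (M0 p l β) * Polynomial.X ^ (β.card - α.card) := by
  classical
  have hα' := mem_partitionsOf.1 hα
  rw [Finset.prod_congr rfl (fun τ hτ => Rpoly_eq_sum p l τ (hα'.1 τ hτ)),
    Finset.prod_sum]
  refine Finset.sum_nbij' (i := fun g => α.attach.biUnion (fun τ => g τ.1 τ.2))
    (j := fun β => fun τ _ => β.filter (· ⊆ τ)) ?_ ?_ ?_ ?_ ?_
  · -- biUnion of partitions of the blocks is a refining partition of T
    intro g hg
    rw [Finset.mem_pi] at hg
    have hdisj : ∀ x ∈ α.attach, ∀ y ∈ α.attach, x ≠ y →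
        Disjoint (g x.1 x.2) (g y.1 y.2) := by
      intro x hx y hy hne
      rw [Finset.disjoint_left]
      intro σ hσx hσy
      have hne1 : x.1 ≠ y.1 := fun h => hne (Subtype.ext h)
      have hd : Disjoint (id x.1) (id y.1) := hα'.2.1 (Finset.mem_coe.2 x.2)
        (Finset.mem_coe.2 y.2) hne1
      simp only [id] at hd
      obtain ⟨a, ha⟩ := (mem_partitionsOf.1 (hg x.1 x.2)).1 σ hσx
      exact Finset.disjoint_left.1 hd (subset_of_mem (hg x.1 x.2) hσx ha)
        (subset_of_mem (hg y.1 y.2) hσy ha)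
    rw [Finset.mem_filter]
    constructor
    · rw [mem_partitionsOf]
      refine ⟨?_, ?_, ?_⟩
      · intro σ hσ
        obtain ⟨x, -, hσx⟩ := Finset.mem_biUnion.1 hσ
        exact (mem_partitionsOf.1 (hg x.1 x.2)).1 σ hσx
      · intro σ₁ h₁ σ₂ h₂ hne
        obtain ⟨x, -, hσ₁⟩ := Finset.mem_biUnion.1 (Finset.mem_coe.1 h₁)
        obtain ⟨y, -, hσ₂⟩ := Finset.mem_biUnion.1 (Finset.mem_coe.1 h₂)
        by_cases hxy : x = y
        · subst hxy
          exact (mem_partitionsOf.1 (hg x.1 x.2)).2.1 (Finset.mem_coe.2 hσ₁)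
            (Finset.mem_coe.2 hσ₂) hne
        · show Disjoint (id σ₁) (id σ₂)
          simp only [id]
          rw [Finset.disjoint_left]
          intro a ha₁ ha₂
          have hne1 : x.1 ≠ y.1 := fun h => hxy (Subtype.ext h)
          have hd : Disjoint (id x.1) (id y.1) := hα'.2.1 (Finset.mem_coe.2 x.2)
            (Finset.mem_coe.2 y.2) hne1
          simp only [id] at hd
          exact Finset.disjoint_left.1 hd (subset_of_mem (hg x.1 x.2) hσ₁ ha₁)
            (subset_of_mem (hg y.1 y.2) hσ₂ ha₂)
      · ext a
        rw [Finset.mem_sup]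
        constructor
        · rintro ⟨σ, hσ, haσ⟩
          obtain ⟨x, -, hσx⟩ := Finset.mem_biUnion.1 hσ
          exact subset_of_mem hα x.2 (subset_of_mem (hg x.1 x.2) hσx haσ)
        · intro ha
          obtain ⟨τ, hτ, haτ⟩ := exists_block hα ha
          obtain ⟨σ, hσ, haσ⟩ := exists_block (hg τ hτ) haτ
          exact ⟨σ, Finset.mem_biUnion.2 ⟨⟨τ, hτ⟩, Finset.mem_attach _ _, hσ⟩, haσ⟩
    · intro σ hσ
      obtain ⟨x, -, hσx⟩ := Finset.mem_biUnion.1 hσ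
      exact ⟨x.1, x.2, subset_of_mem (hg x.1 x.2) hσx⟩
  · -- restriction of a refining partition to a block
    intro β hβf
    obtain ⟨hβP, href⟩ := Finset.mem_filter.1 hβf
    rw [Finset.mem_pi]
    intro τ hτ
    rw [mem_partitionsOf]
    refine ⟨?_, ?_, ?_⟩
    · intro σ hσ
      exact (mem_partitionsOf.1 hβP).1 σ (Finset.mem_of_mem_filter σ hσ)
    · exact (mem_partitionsOf.1 hβP).2.1.subset
        (by exact_mod_cast Finset.coe_subset.2 (Finset.filter_subset _ _))
    · apply le_antisymm
      · apply Finset.sup_le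
        intro σ hσ
        exact (Finset.mem_filter.1 hσ).2
      · intro a ha
        have haT : a ∈ T := subset_of_mem hα hτ ha
        obtain ⟨σ, hσ, haσ⟩ := exists_block hβP haT
        obtain ⟨τ'', hτ'', hsub⟩ := href σ hσ
        have : τ'' = τ := blocks_eq hα hτ'' hτ (hsub haσ) ha
        subst this
        rw [Finset.mem_sup]
        exact ⟨σ, Finset.mem_filter.2 ⟨hσ, hsub⟩, haσ⟩
  · -- left inverse
    intro g hg
    rw [Finset.mem_pi] at hg
    funext τ hτ
    ext σ
    rw [Finset.mem_filter, Finset.mem_biUnion]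
    constructor
    · rintro ⟨⟨x, -, hσx⟩, hsub⟩
      have hne : σ.Nonempty := (mem_partitionsOf.1 (hg x.1 x.2)).1 σ hσx
      obtain ⟨a, ha⟩ := hne
      have : x.1 = τ := blocks_eq hα x.2 hτ (subset_of_mem (hg x.1 x.2) hσx ha) (hsub ha)
      subst this
      exact hσx
    · intro hσ
      exact ⟨⟨⟨τ, hτ⟩, Finset.mem_attach _ _, hσ⟩, subset_of_mem (hg τ hτ) hσ⟩
  · -- right inverse
    intro β hβf
    obtain ⟨hβP, href⟩ := Finset.mem_filter.1 hβf
    ext σ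
    rw [Finset.mem_biUnion]
    constructor
    · rintro ⟨x, -, hσx⟩
      exact Finset.mem_of_mem_filter σ hσx
    · intro hσ
      obtain ⟨τ, hτ, hsub⟩ := href σ hσ
      exact ⟨⟨τ, hτ⟩, Finset.mem_attach _ _, Finset.mem_filter.2 ⟨hσ, hsub⟩⟩
  · -- values agree
    intro g hg
    rw [Finset.mem_pi] at hg
    have hdisj : ∀ x ∈ α.attach, ∀ y ∈ α.attach, x ≠ y →
        Disjoint (g x.1 x.2) (g y.1 y.2) := by
      intro x hx y hy hne
      rw [Finset.disjoint_left]
      intro σ hσx hσy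
      have hne1 : x.1 ≠ y.1 := fun h => hne (Subtype.ext h)
      have hd : Disjoint (id x.1) (id y.1) := hα'.2.1 (Finset.mem_coe.2 x.2)
        (Finset.mem_coe.2 y.2) hne1
      simp only [id] at hd
      obtain ⟨a, ha⟩ := (mem_partitionsOf.1 (hg x.1 x.2)).1 σ hσx
      exact Finset.disjoint_left.1 hd (subset_of_mem (hg x.1 x.2) hσx ha)
        (subset_of_mem (hg y.1 y.2) hσy ha)
    have hM : M0 p l (α.attach.biUnion (fun τ => g τ.1 τ.2))
        = ∏ x ∈ α.attach, M0 p l (g x.1 x.2) := by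
      unfold M0
      exact Finset.prod_biUnion (fun x hx y hy hne => hdisj x hx y hy hne)
    have hcard : (α.attach.biUnion (fun τ => g τ.1 τ.2)).card
        = ∑ x ∈ α.attach, (g x.1 x.2).card := Finset.card_biUnion hdisj
    have hone : ∀ x ∈ α.attach, 1 ≤ (g x.1 x.2).card := by
      intro x hx
      exact Finset.card_pos.2 (nonempty_of_mem_partitionsOf (hα'.1 x.1 x.2) (hg x.1 x.2))
    have hsum : ∑ x ∈ α.attach, ((g x.1 x.2).card - 1)
        = (∑ x ∈ α.attach, (g x.1 x.2).card) - α.card := by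
      rw [Finset.sum_tsub_distrib _ hone]
      simp
    rw [Finset.prod_mul_distrib, ← map_prod, Finset.prod_pow_eq_pow_sum, hsum, hM, hcard]

end Stmt16

/-- for any set partition `α` of `[n]` and any `i ≥ 0`, the coefficient
`M_i(α)` of `x^i` in `∏_{τ∈α} R^τ(x)` equals `∑_{β ∈ Cut(α,i)} M₀(β)`, where `Cut(α,i)`
is the set of partitions `β` refining `α` with `|β| = |α| + i`, and
`M₀(β) = ∏_{τ∈β} (−1)^{|τ|−1} M(τ)`. -/
theorem stmt16 (p n : ℕ) (hp : p.Prime) (l : Fin n → ℕ) (hl : StrictMono l)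
    (hl1 : ∀ j, 1 ≤ l j)
    (α : Finset (Finset (Fin n))) (hα : IsSetPartition α) (i : ℕ) :
    (∏ τ ∈ α, Rpoly p l τ).coeff i =
      ∑ β ∈ Finset.univ.filter (fun β : Finset (Finset (Fin n)) =>
          IsSetPartition β ∧ (∀ τ ∈ β, ∃ τ' ∈ α, τ ⊆ τ') ∧ β.card = α.card + i),
        ∏ τ ∈ β, ((-1 : ℤ) ^ (τ.card - 1) * Mterm p l τ) := by
  classical
  have hα' : α ∈ Stmt16.partitionsOf (Finset.univ : Finset (Fin n)) :=
    Stmt16.mem_partitionsOf.2 hα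
  rw [Stmt16.prod_Rpoly p l hα', Polynomial.finset_sum_coeff,
    Finset.sum_congr rfl (fun β hβ => by
      rw [Polynomial.coeff_C_mul, Polynomial.coeff_X_pow, mul_ite, mul_one, mul_zero]),
    ← Finset.sum_filter]
  have hset : (((Stmt16.partitionsOf (Finset.univ : Finset (Fin n))).filter
        (fun β => ∀ σ ∈ β, ∃ τ ∈ α, σ ⊆ τ)).filter (fun β => i = β.card - α.card)) =
      Finset.univ.filter (fun β : Finset (Finset (Fin n)) =>
        IsSetPartition β ∧ (∀ τ ∈ β, ∃ τ' ∈ α, τ ⊆ τ') ∧ β.card = α.card + i) := by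
    ext β
    simp only [Finset.mem_filter, Finset.mem_univ, true_and]
    constructor
    · rintro ⟨⟨hP, href⟩, hcard⟩
      have hle := Stmt16.card_le_of_refines hα' hP href
      have hP' : IsSetPartition β := Stmt16.mem_partitionsOf.1 hP
      exact ⟨hP', href, by omega⟩
    · rintro ⟨hP, href, hcard⟩
      exact ⟨⟨Stmt16.mem_partitionsOf.2 hP, href⟩, by omega⟩
  rw [hset]
  rfl
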